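/- For n = 5, the Cayley graph Γ of F₂⁵ (restricted as described to the cap S with |S| = 9) has spectrum 9^(1), 5^(1), 1^(21), (−3)^(7), (−7)^(2); in particular the rank of A_Γ − I over ℚ equals 32 − 21 = 11, and hence rank over F₂ of A_Γ + I is at most 11. -/

import Mathlib

open Matrix Polynomial

/-- Adjacency matrix over `F` of the Cayley graph of `F₂⁵` with connection set `S`
(in characteristic 2, `x - y = x + y`). -/
def cayAdj (F : Type*) [Zero F] [One F] (S : Finset (Fin 5 → ZMod 2)) :
    Matrix (Fin 5 → ZMod 2) (Fin 5 → ZMod 2) F :=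
  Matrix.of fun x y => if x + y ∈ S then 1 else 0

def S0 : Finset (Fin 5 → ZMod 2) :=
  {![0,0,1,1,0], ![0,1,0,1,0], ![0,1,1,1,0], ![1,0,0,1,0], ![1,0,1,1,0], ![1,1,0,1,0], ![1,1,1,1,0], ![0,0,0,0,1], ![0,0,0,1,1]}

def lamZ : Fin 32 → ℤ := ![9,5,1,1,1,1,1,1,1,1,1,1,1,1,1,1,1,1,1,1,1,1,1,-3,-3,-3,-3,-3,-3,-3,-7,-7]

def AZ : Matrix (Fin 32) (Fin 32) ℤ :=
  !![0, 1, 0, 1, 0, 0, 1, 0, 0, 0, 1, 0, 0, 0, 1, 0, 0, 0, 1, 0, 0, 0, 1, 0, 0, 0, 1, 0, 0, 0, 1, 0;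
  1, 0, 1, 0, 0, 0, 0, 1, 0, 0, 0, 1, 0, 0, 0, 1, 0, 0, 0, 1, 0, 0, 0, 1, 0, 0, 0, 1, 0, 0, 0, 1;
  0, 1, 0, 1, 1, 0, 0, 0, 1, 0, 0, 0, 1, 0, 0, 0, 1, 0, 0, 0, 1, 0, 0, 0, 1, 0, 0, 0, 1, 0, 0, 0;
  1, 0, 1, 0, 0, 1, 0, 0, 0, 1, 0, 0, 0, 1, 0, 0, 0, 1, 0, 0, 0, 1, 0, 0, 0, 1, 0, 0, 0, 1, 0, 0;
  0, 0, 1, 0, 0, 1, 0, 1, 0, 0, 1, 0, 0, 0, 1, 0, 0, 0, 1, 0, 0, 0, 1, 0, 0, 0, 1, 0, 0, 0, 1, 0;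
  0, 0, 0, 1, 1, 0, 1, 0, 0, 0, 0, 1, 0, 0, 0, 1, 0, 0, 0, 1, 0, 0, 0, 1, 0, 0, 0, 1, 0, 0, 0, 1;
  1, 0, 0, 0, 0, 1, 0, 1, 1, 0, 0, 0, 1, 0, 0, 0, 1, 0, 0, 0, 1, 0, 0, 0, 1, 0, 0, 0, 1, 0, 0, 0;
  0, 1, 0, 0, 1, 0, 1, 0, 0, 1, 0, 0, 0, 1, 0, 0, 0, 1, 0, 0, 0, 1, 0, 0, 0, 1, 0, 0, 0, 1, 0, 0;
  0, 0, 1, 0, 0, 0, 1, 0, 0, 1, 0, 1, 0, 0, 1, 0, 0, 0, 1, 0, 0, 0, 1, 0, 0, 0, 1, 0, 0, 0, 1, 0;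
  0, 0, 0, 1, 0, 0, 0, 1, 1, 0, 1, 0, 0, 0, 0, 1, 0, 0, 0, 1, 0, 0, 0, 1, 0, 0, 0, 1, 0, 0, 0, 1;
  1, 0, 0, 0, 1, 0, 0, 0, 0, 1, 0, 1, 1, 0, 0, 0, 1, 0, 0, 0, 1, 0, 0, 0, 1, 0, 0, 0, 1, 0, 0, 0;
  0, 1, 0, 0, 0, 1, 0, 0, 1, 0, 1, 0, 0, 1, 0, 0, 0, 1, 0, 0, 0, 1, 0, 0, 0, 1, 0, 0, 0, 1, 0, 0;
  0, 0, 1, 0, 0, 0, 1, 0, 0, 0, 1, 0, 0, 1, 0, 1, 0, 0, 1, 0, 0, 0, 1, 0, 0, 0, 1, 0, 0, 0, 1, 0;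
  0, 0, 0, 1, 0, 0, 0, 1, 0, 0, 0, 1, 1, 0, 1, 0, 0, 0, 0, 1, 0, 0, 0, 1, 0, 0, 0, 1, 0, 0, 0, 1;
  1, 0, 0, 0, 1, 0, 0, 0, 1, 0, 0, 0, 0, 1, 0, 1, 1, 0, 0, 0, 1, 0, 0, 0, 1, 0, 0, 0, 1, 0, 0, 0;
  0, 1, 0, 0, 0, 1, 0, 0, 0, 1, 0, 0, 1, 0, 1, 0, 0, 1, 0, 0, 0, 1, 0, 0, 0, 1, 0, 0, 0, 1, 0, 0;
  0, 0, 1, 0, 0, 0, 1, 0, 0, 0, 1, 0, 0, 0, 1, 0, 0, 1, 0, 1, 0, 0, 1, 0, 0, 0, 1, 0, 0, 0, 1, 0;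
  0, 0, 0, 1, 0, 0, 0, 1, 0, 0, 0, 1, 0, 0, 0, 1, 1, 0, 1, 0, 0, 0, 0, 1, 0, 0, 0, 1, 0, 0, 0, 1;
  1, 0, 0, 0, 1, 0, 0, 0, 1, 0, 0, 0, 1, 0, 0, 0, 0, 1, 0, 1, 1, 0, 0, 0, 1, 0, 0, 0, 1, 0, 0, 0;
  0, 1, 0, 0, 0, 1, 0, 0, 0, 1, 0, 0, 0, 1, 0, 0, 1, 0, 1, 0, 0, 1, 0, 0, 0, 1, 0, 0, 0, 1, 0, 0;
  0, 0, 1, 0, 0, 0, 1, 0, 0, 0, 1, 0, 0, 0, 1, 0, 0, 0, 1, 0, 0, 1, 0, 1, 0, 0, 1, 0, 0, 0, 1, 0;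
  0, 0, 0, 1, 0, 0, 0, 1, 0, 0, 0, 1, 0, 0, 0, 1, 0, 0, 0, 1, 1, 0, 1, 0, 0, 0, 0, 1, 0, 0, 0, 1;
  1, 0, 0, 0, 1, 0, 0, 0, 1, 0, 0, 0, 1, 0, 0, 0, 1, 0, 0, 0, 0, 1, 0, 1, 1, 0, 0, 0, 1, 0, 0, 0;
  0, 1, 0, 0, 0, 1, 0, 0, 0, 1, 0, 0, 0, 1, 0, 0, 0, 1, 0, 0, 1, 0, 1, 0, 0, 1, 0, 0, 0, 1, 0, 0;
  0, 0, 1, 0, 0, 0, 1, 0, 0, 0, 1, 0, 0, 0, 1, 0, 0, 0, 1, 0, 0, 0, 1, 0, 0, 1, 0, 1, 0, 0, 1, 0;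
  0, 0, 0, 1, 0, 0, 0, 1, 0, 0, 0, 1, 0, 0, 0, 1, 0, 0, 0, 1, 0, 0, 0, 1, 1, 0, 1, 0, 0, 0, 0, 1;
  1, 0, 0, 0, 1, 0, 0, 0, 1, 0, 0, 0, 1, 0, 0, 0, 1, 0, 0, 0, 1, 0, 0, 0, 0, 1, 0, 1, 1, 0, 0, 0;
  0, 1, 0, 0, 0, 1, 0, 0, 0, 1, 0, 0, 0, 1, 0, 0, 0, 1, 0, 0, 0, 1, 0, 0, 1, 0, 1, 0, 0, 1, 0, 0;
  0, 0, 1, 0, 0, 0, 1, 0, 0, 0, 1, 0, 0, 0, 1, 0, 0, 0, 1, 0, 0, 0, 1, 0, 0, 0, 1, 0, 0, 1, 0, 1;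
  0, 0, 0, 1, 0, 0, 0, 1, 0, 0, 0, 1, 0, 0, 0, 1, 0, 0, 0, 1, 0, 0, 0, 1, 0, 0, 0, 1, 1, 0, 1, 0;
  1, 0, 0, 0, 1, 0, 0, 0, 1, 0, 0, 0, 1, 0, 0, 0, 1, 0, 0, 0, 1, 0, 0, 0, 1, 0, 0, 0, 0, 1, 0, 1;
  0, 1, 0, 0, 0, 1, 0, 0, 0, 1, 0, 0, 0, 1, 0, 0, 0, 1, 0, 0, 0, 1, 0, 0, 0, 1, 0, 0, 1, 0, 1, 0]

def HZ : Matrix (Fin 32) (Fin 32) ℤ :=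
  !![1, 1, 1, 1, 1, 1, 1, 1, 1, 1, 1, 1, 1, 1, 1, 1, 1, 1, 1, 1, 1, 1, 1, 1, 1, 1, 1, 1, 1, 1, 1, 1;
  1, -1, 1, 1, -1, 1, 1, -1, 1, 1, -1, 1, 1, -1, 1, 1, -1, 1, 1, -1, 1, 1, -1, -1, -1, -1, -1, -1, -1, -1, 1, -1;
  1, 1, 1, -1, -1, 1, -1, -1, 1, -1, -1, 1, -1, -1, 1, -1, -1, 1, -1, -1, 1, -1, -1, 1, 1, 1, 1, 1, 1, 1, -1, -1;
  1, -1, 1, -1, 1, 1, -1, 1, 1, -1, 1, 1, -1, 1, 1, -1, 1, 1, -1, 1, 1, -1, 1, -1, -1, -1, -1, -1, -1, -1, -1, 1;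
  1, 1, -1, -1, -1, 1, 1, 1, -1, -1, -1, 1, 1, 1, -1, -1, -1, 1, 1, 1, -1, -1, -1, -1, 1, -1, 1, -1, 1, -1, 1, 1;
  1, -1, -1, -1, 1, 1, 1, -1, -1, -1, 1, 1, 1, -1, -1, -1, 1, 1, 1, -1, -1, -1, 1, 1, -1, 1, -1, 1, -1, 1, 1, -1;
  1, 1, -1, 1, 1, 1, -1, -1, -1, 1, 1, 1, -1, -1, -1, 1, 1, 1, -1, -1, -1, 1, 1, -1, 1, -1, 1, -1, 1, -1, -1, -1;
  1, -1, -1, 1, -1, 1, -1, 1, -1, 1, -1, 1, -1, 1, -1, 1, -1, 1, -1, 1, -1, 1, -1, 1, -1, 1, -1, 1, -1, 1, -1, 1;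
  1, 1, 1, 1, 1, -1, -1, -1, -1, -1, -1, 1, 1, 1, 1, 1, 1, -1, -1, -1, -1, -1, -1, 1, -1, -1, 1, 1, -1, -1, 1, 1;
  1, -1, 1, 1, -1, -1, -1, 1, -1, -1, 1, 1, 1, -1, 1, 1, -1, -1, -1, 1, -1, -1, 1, -1, 1, 1, -1, -1, 1, 1, 1, -1;
  1, 1, 1, -1, -1, -1, 1, 1, -1, 1, 1, 1, -1, -1, 1, -1, -1, -1, 1, 1, -1, 1, 1, 1, -1, -1, 1, 1, -1, -1, -1, -1;
  1, -1, 1, -1, 1, -1, 1, -1, -1, 1, -1, 1, -1, 1, 1, -1, 1, -1, 1, -1, -1, 1, -1, -1, 1, 1, -1, -1, 1, 1, -1, 1;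
  1, 1, -1, -1, -1, -1, -1, -1, 1, 1, 1, 1, 1, 1, -1, -1, -1, -1, -1, -1, 1, 1, 1, -1, -1, 1, 1, -1, -1, 1, 1, 1;
  1, -1, -1, -1, 1, -1, -1, 1, 1, 1, -1, 1, 1, -1, -1, -1, 1, -1, -1, 1, 1, 1, -1, 1, 1, -1, -1, 1, 1, -1, 1, -1;
  1, 1, -1, 1, 1, -1, 1, 1, 1, -1, -1, 1, -1, -1, -1, 1, 1, -1, 1, 1, 1, -1, -1, -1, -1, 1, 1, -1, -1, 1, -1, -1;
  1, -1, -1, 1, -1, -1, 1, -1, 1, -1, 1, 1, -1, 1, -1, 1, -1, -1, 1, -1, 1, -1, 1, 1, 1, -1, -1, 1, 1, -1, -1, 1;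
  1, 1, 1, 1, 1, 1, 1, 1, 1, 1, 1, -1, -1, -1, -1, -1, -1, -1, -1, -1, -1, -1, -1, 1, 1, 1, -1, -1, -1, -1, 1, 1;
  1, -1, 1, 1, -1, 1, 1, -1, 1, 1, -1, -1, -1, 1, -1, -1, 1, -1, -1, 1, -1, -1, 1, -1, -1, -1, 1, 1, 1, 1, 1, -1;
  1, 1, 1, -1, -1, 1, -1, -1, 1, -1, -1, -1, 1, 1, -1, 1, 1, -1, 1, 1, -1, 1, 1, 1, 1, 1, -1, -1, -1, -1, -1, -1;
  1, -1, 1, -1, 1, 1, -1, 1, 1, -1, 1, -1, 1, -1, -1, 1, -1, -1, 1, -1, -1, 1, -1, -1, -1, -1, 1, 1, 1, 1, -1, 1;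
  1, 1, -1, -1, -1, 1, 1, 1, -1, -1, -1, -1, -1, -1, 1, 1, 1, -1, -1, -1, 1, 1, 1, -1, 1, -1, -1, 1, -1, 1, 1, 1;
  1, -1, -1, -1, 1, 1, 1, -1, -1, -1, 1, -1, -1, 1, 1, 1, -1, -1, -1, 1, 1, 1, -1, 1, -1, 1, 1, -1, 1, -1, 1, -1;
  1, 1, -1, 1, 1, 1, -1, -1, -1, 1, 1, -1, 1, 1, 1, -1, -1, -1, 1, 1, 1, -1, -1, -1, 1, -1, -1, 1, -1, 1, -1, -1;
  1, -1, -1, 1, -1, 1, -1, 1, -1, 1, -1, -1, 1, -1, 1, -1, 1, -1, 1, -1, 1, -1, 1, 1, -1, 1, 1, -1, 1, -1, -1, 1;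
  1, 1, 1, 1, 1, -1, -1, -1, -1, -1, -1, -1, -1, -1, -1, -1, -1, 1, 1, 1, 1, 1, 1, 1, -1, -1, -1, -1, 1, 1, 1, 1;
  1, -1, 1, 1, -1, -1, -1, 1, -1, -1, 1, -1, -1, 1, -1, -1, 1, 1, 1, -1, 1, 1, -1, -1, 1, 1, 1, 1, -1, -1, 1, -1;
  1, 1, 1, -1, -1, -1, 1, 1, -1, 1, 1, -1, 1, 1, -1, 1, 1, 1, -1, -1, 1, -1, -1, 1, -1, -1, -1, -1, 1, 1, -1, -1;
  1, -1, 1, -1, 1, -1, 1, -1, -1, 1, -1, -1, 1, -1, -1, 1, -1, 1, -1, 1, 1, -1, 1, -1, 1, 1, 1, 1, -1, -1, -1, 1;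
  1, 1, -1, -1, -1, -1, -1, -1, 1, 1, 1, -1, -1, -1, 1, 1, 1, 1, 1, 1, -1, -1, -1, -1, -1, 1, -1, 1, 1, -1, 1, 1;
  1, -1, -1, -1, 1, -1, -1, 1, 1, 1, -1, -1, -1, 1, 1, 1, -1, 1, 1, -1, -1, -1, 1, 1, 1, -1, 1, -1, -1, 1, 1, -1;
  1, 1, -1, 1, 1, -1, 1, 1, 1, -1, -1, -1, 1, 1, 1, -1, -1, 1, -1, -1, -1, 1, 1, -1, -1, 1, -1, 1, 1, -1, -1, -1;
  1, -1, -1, 1, -1, -1, 1, -1, 1, -1, 1, -1, 1, -1, 1, -1, 1, 1, -1, 1, -1, 1, -1, 1, 1, -1, 1, -1, -1, 1, -1, 1]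

def CB : Matrix (Fin 32) (Fin 11) (ZMod 2) :=
  !![1, 0, 0, 0, 0, 0, 0, 0, 0, 0, 0;
  1, 1, 0, 0, 0, 0, 0, 0, 0, 0, 0;
  0, 1, 1, 0, 0, 0, 0, 0, 0, 0, 0;
  1, 1, 1, 1, 0, 0, 0, 0, 0, 0, 0;
  0, 1, 0, 1, 1, 0, 0, 0, 0, 0, 0;
  0, 0, 0, 1, 1, 0, 0, 0, 0, 0, 0;
  1, 0, 1, 1, 1, 0, 0, 0, 0, 0, 0;
  0, 0, 1, 0, 1, 0, 0, 0, 0, 0, 0;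
  0, 1, 0, 1, 0, 1, 0, 0, 0, 0, 0;
  0, 0, 0, 1, 0, 1, 0, 0, 0, 0, 0;
  1, 0, 1, 1, 0, 1, 0, 0, 0, 0, 0;
  0, 0, 1, 0, 0, 1, 0, 0, 0, 0, 0;
  0, 1, 0, 1, 1, 1, 1, 0, 0, 0, 0;
  0, 0, 0, 1, 1, 1, 1, 0, 0, 0, 0;
  1, 0, 1, 1, 1, 1, 1, 0, 0, 0, 0;
  0, 0, 1, 0, 1, 1, 1, 0, 0, 0, 0;
  0, 1, 0, 1, 1, 1, 0, 1, 0, 0, 0;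
  0, 0, 0, 1, 1, 1, 0, 1, 0, 0, 0;
  1, 0, 1, 1, 1, 1, 0, 1, 0, 0, 0;
  0, 0, 1, 0, 1, 1, 0, 1, 0, 0, 0;
  0, 1, 0, 1, 1, 1, 1, 1, 1, 0, 0;
  0, 0, 0, 1, 1, 1, 1, 1, 1, 0, 0;
  1, 0, 1, 1, 1, 1, 1, 1, 1, 0, 0;
  0, 0, 1, 0, 1, 1, 1, 1, 1, 0, 0;
  0, 1, 0, 1, 1, 1, 1, 1, 0, 1, 0;
  0, 0, 0, 1, 1, 1, 1, 1, 0, 1, 0;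
  1, 0, 1, 1, 1, 1, 1, 1, 0, 1, 0;
  0, 0, 1, 0, 1, 1, 1, 1, 0, 1, 0;
  0, 1, 0, 1, 1, 1, 1, 1, 1, 1, 0;
  0, 0, 0, 1, 1, 1, 1, 1, 1, 1, 0;
  1, 0, 1, 1, 1, 1, 1, 1, 1, 1, 0;
  0, 0, 1, 0, 1, 1, 1, 1, 1, 1, 0]

def RB : Matrix (Fin 11) (Fin 32) (ZMod 2) :=
  !![1, 1, 0, 1, 0, 0, 1, 0, 0, 0, 1, 0, 0, 0, 1, 0, 0, 0, 1, 0, 0, 0, 1, 0, 0, 0, 1, 0, 0, 0, 1, 0;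
  0, 0, 1, 1, 0, 0, 1, 1, 0, 0, 1, 1, 0, 0, 1, 1, 0, 0, 1, 1, 0, 0, 1, 1, 0, 0, 1, 1, 0, 0, 1, 1;
  0, 1, 0, 0, 1, 0, 1, 1, 1, 0, 1, 1, 1, 0, 1, 1, 1, 0, 1, 1, 1, 0, 1, 1, 1, 0, 1, 1, 1, 0, 1, 1;
  0, 0, 0, 1, 1, 1, 1, 0, 1, 1, 1, 0, 1, 1, 1, 0, 1, 1, 1, 0, 1, 1, 1, 0, 1, 1, 1, 0, 1, 1, 1, 0;
  0, 0, 0, 0, 0, 0, 0, 0, 1, 1, 1, 1, 1, 1, 1, 1, 1, 1, 1, 1, 1, 1, 1, 1, 1, 1, 1, 1, 1, 1, 1, 1;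
  0, 0, 0, 0, 1, 1, 1, 1, 0, 0, 0, 0, 1, 1, 1, 1, 1, 1, 1, 1, 1, 1, 1, 1, 1, 1, 1, 1, 1, 1, 1, 1;
  0, 0, 0, 0, 0, 0, 0, 0, 0, 0, 0, 0, 0, 0, 0, 0, 1, 1, 1, 1, 1, 1, 1, 1, 1, 1, 1, 1, 1, 1, 1, 1;
  0, 0, 0, 0, 0, 0, 0, 0, 0, 0, 0, 0, 1, 1, 1, 1, 0, 0, 0, 0, 1, 1, 1, 1, 1, 1, 1, 1, 1, 1, 1, 1;
  0, 0, 0, 0, 0, 0, 0, 0, 0, 0, 0, 0, 0, 0, 0, 0, 0, 0, 0, 0, 0, 0, 0, 0, 1, 1, 1, 1, 1, 1, 1, 1;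
  0, 0, 0, 0, 0, 0, 0, 0, 0, 0, 0, 0, 0, 0, 0, 0, 0, 0, 0, 0, 1, 1, 1, 1, 0, 0, 0, 0, 1, 1, 1, 1;
  0, 0, 0, 0, 0, 0, 0, 0, 0, 0, 0, 0, 0, 0, 0, 0, 0, 0, 0, 0, 0, 0, 0, 0, 0, 0, 0, 0, 0, 0, 0, 0]

def toIdx (x : Fin 5 → ZMod 2) : Fin 32 :=
  ⟨(x 0).val*16+(x 1).val*8+(x 2).val*4+(x 3).val*2+(x 4).val, by
    have h0 := (x 0).val_lt; have h1 := (x 1).val_lt; have h2 := (x 2).val_lt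
    have h3 := (x 3).val_lt; have h4 := (x 4).val_lt
    omega⟩

def ofIdx (i : Fin 32) : Fin 5 → ZMod 2 :=
  ![(i.val/16 : ℕ), (i.val/8 : ℕ), (i.val/4 : ℕ), (i.val/2 : ℕ), (i.val : ℕ)]

def eV : (Fin 5 → ZMod 2) ≃ Fin 32 where
  toFun := toIdx
  invFun := ofIdx
  left_inv := by decide
  right_inv := by decide

set_option maxRecDepth 100000 in
set_option maxHeartbeats 2000000 in
lemma key1 : ∀ i j : Fin 32, cayAdj ℤ S0 (ofIdx i) (ofIdx j) = AZ i j :=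
  @of_decide_eq_true _ (@Nat.decidableForallFin 32 _ fun i => @Nat.decidableForallFin 32 _ fun j =>
    Int.decEq (cayAdj ℤ S0 (ofIdx i) (ofIdx j)) (AZ i j)) rfl

set_option maxRecDepth 100000 in
set_option maxHeartbeats 2000000 in
lemma key2 : ∀ i j : Fin 32, (AZ * HZ) i j = (HZ * diagonal lamZ) i j := by decide

set_option maxRecDepth 100000 in
set_option maxHeartbeats 2000000 in
lemma key3 : ∀ i j : Fin 32, (HZᵀ * HZ) i j = if i = j then 32 else 0 := by decide

set_option maxRecDepth 100000 in
set_option maxHeartbeats 4000000 in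
lemma keyB : ∀ i j : Fin 32,
    (cayAdj (ZMod 2) S0 + 1) (ofIdx i) (ofIdx j) = (CB * RB) i j := by decide

-- ## Generic lemmas

lemma charpoly_conj_eq {n R : Type*} [Fintype n] [DecidableEq n] [CommRing R]
    (H K D : Matrix n n R) (h1 : H * K = 1) (h2 : K * H = 1) :
    (H * D * K).charpoly = D.charpoly := by
  have hsc : ∀ M : Matrix n n R[X], Matrix.scalar n (X : R[X]) * M = M * Matrix.scalar n X :=
    fun M => (scalar_commute (X : R[X]) (fun r => mul_comm _ _) M).eq
  have hHK1 : (C : R →+* R[X]).mapMatrix H * (C : R →+* R[X]).mapMatrix K = 1 := by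
    rw [← _root_.map_mul, h1, _root_.map_one]
  have key : charmatrix (H * D * K) =
      (C : R →+* R[X]).mapMatrix H * charmatrix D * (C : R →+* R[X]).mapMatrix K := by
    rw [charmatrix, charmatrix, _root_.map_mul, _root_.map_mul, Matrix.mul_sub, Matrix.sub_mul]
    congr 1
    rw [mul_assoc, hsc ((C : R →+* R[X]).mapMatrix K), ← mul_assoc, hHK1, one_mul]
  rw [Matrix.charpoly, Matrix.charpoly, key, det_mul, det_mul]
  have hdet : ((C : R →+* R[X]).mapMatrix H).det * ((C : R →+* R[X]).mapMatrix K).det = 1 := by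
    rw [← det_mul, hHK1, det_one]
  calc ((C : R →+* R[X]).mapMatrix H).det * (charmatrix D).det *
        ((C : R →+* R[X]).mapMatrix K).det
      = (charmatrix D).det * (((C : R →+* R[X]).mapMatrix H).det *
        ((C : R →+* R[X]).mapMatrix K).det) := by ring
    _ = (charmatrix D).det := by rw [hdet, mul_one]

lemma charpoly_diagonal' {n R : Type*} [Fintype n] [DecidableEq n] [CommRing R] (d : n → R) :
    (diagonal d).charpoly = ∏ i, (X - C (d i)) := by
  have h : charmatrix (diagonal d) = diagonal fun i => (X : R[X]) - C (d i) := by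
    ext i j
    by_cases h : i = j
    · subst h; simp
    · rw [charmatrix_apply_ne _ _ _ h, diagonal_apply_ne _ h, diagonal_apply_ne _ h,
        map_zero, neg_zero]
  rw [Matrix.charpoly, h, det_diagonal]

-- ## Rational-level data

noncomputable def Aq : Matrix (Fin 32) (Fin 32) ℚ := AZ.map (Int.cast)
noncomputable def Hq : Matrix (Fin 32) (Fin 32) ℚ := HZ.map (Int.cast)
noncomputable def Kq : Matrix (Fin 32) (Fin 32) ℚ := (32:ℚ)⁻¹ • Hqᵀ
noncomputable def lamQ : Fin 32 → ℚ := fun i => ((lamZ i : ℤ) : ℚ)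

lemma map_mulQ (X Y : Matrix (Fin 32) (Fin 32) ℤ) :
    (X * Y).map (Int.cast : ℤ → ℚ) = X.map Int.cast * Y.map Int.cast := by
  have h := _root_.map_mul ((Int.castRingHom ℚ).mapMatrix) X Y
  simpa [RingHom.mapMatrix_apply] using h

lemma hZcay : cayAdj ℤ S0 = AZ.submatrix ⇑eV ⇑eV := by
  ext x y
  have h := key1 (eV x) (eV y)
  rwa [show ofIdx (eV x) = x from eV.left_inv x, show ofIdx (eV y) = y from eV.left_inv y] at h

lemma hQcay : cayAdj ℚ S0 = Aq.submatrix ⇑eV ⇑eV := by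
  have h : cayAdj ℚ S0 = (cayAdj ℤ S0).map (Int.cast) := by
    ext x y
    simp [cayAdj, apply_ite (Int.cast : ℤ → ℚ)]
  rw [h, hZcay, Aq, submatrix_map]

lemma h2cay : cayAdj (ZMod 2) S0 + 1 = CB.submatrix ⇑eV id * RB.submatrix id ⇑eV := by
  ext x y
  have h := keyB (eV x) (eV y)
  rwa [show ofIdx (eV x) = x from eV.left_inv x, show ofIdx (eV y) = y from eV.left_inv y] at h

lemma hAHq : Aq * Hq = Hq * diagonal lamQ := by
  have h : AZ * HZ = HZ * diagonal lamZ := by ext i j; exact key2 i j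
  have h2 : (AZ * HZ).map (Int.cast : ℤ → ℚ) = (HZ * diagonal lamZ).map Int.cast := by rw [h]
  rw [map_mulQ, map_mulQ] at h2
  rwa [show (diagonal lamZ).map (Int.cast : ℤ → ℚ) = diagonal lamQ from by
    rw [diagonal_map (by simp)]; rfl] at h2

lemma hHHZ : HZᵀ * HZ = (32:ℤ) • 1 := by
  ext i j
  rw [key3 i j, Matrix.smul_apply, one_apply]
  split <;> simp

lemma hK3 : Hqᵀ * Hq = (32:ℚ) • 1 := by
  have h2 : (HZᵀ * HZ).map (Int.cast : ℤ → ℚ)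
      = ((32:ℤ) • (1 : Matrix (Fin 32) (Fin 32) ℤ)).map Int.cast := by rw [hHHZ]
  rw [map_mulQ] at h2
  have e1 : HZᵀ.map (Int.cast : ℤ → ℚ) = Hqᵀ := rfl
  have e2 : ((32:ℤ) • (1 : Matrix (Fin 32) (Fin 32) ℤ)).map (Int.cast : ℤ → ℚ)
      = (32:ℚ) • 1 := by
    ext i j
    simp only [Matrix.map_apply, Matrix.smul_apply, Matrix.one_apply, smul_eq_mul]
    split <;> simp
  rw [e1, e2] at h2
  exact h2

lemma hKH : Kq * Hq = 1 := by
  rw [Kq, smul_mul_assoc, hK3, smul_smul]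
  norm_num

lemma hHK : Hq * Kq = 1 := mul_eq_one_comm.mp hKH

lemma hAconj : Aq = Hq * diagonal lamQ * Kq := by
  calc Aq = Aq * (Hq * Kq) := by rw [hHK, mul_one]
    _ = (Aq * Hq) * Kq := by rw [mul_assoc]
    _ = Hq * diagonal lamQ * Kq := by rw [hAHq]

lemma charpoly_Aq : Aq.charpoly =
    (X - C 9) * (X - C 5) * (X - C 1) ^ 21 * (X + C 3) ^ 7 * (X + C 7) ^ 2 := by
  rw [hAconj, charpoly_conj_eq _ _ _ hHK hKH, charpoly_diagonal']
  simp only [lamQ, lamZ, Fin.prod_univ_succ, Fin.prod_univ_zero,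
    Matrix.cons_val_zero, Matrix.cons_val_succ, Int.cast_ofNat, Int.cast_one, Int.cast_neg,
    map_neg, sub_neg_eq_add, mul_one]
  ring

lemma rank_Aq : (Aq - 1).rank = 11 := by
  have h1 : Aq - 1 = Hq * (diagonal lamQ - 1) * Kq := by
    have h : Hq * (diagonal lamQ - 1) * Kq = Hq * diagonal lamQ * Kq - Hq * Kq := by
      rw [Matrix.mul_sub, Matrix.mul_one, Matrix.sub_mul]
    rw [h, hHK, ← hAconj]
  have hub : (Hq * (diagonal lamQ - 1) * Kq).rank ≤ (diagonal lamQ - 1).rank :=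
    le_trans (rank_mul_le_left _ _) (rank_mul_le_right _ _)
  have e : Kq * (Hq * (diagonal lamQ - 1) * Kq) * Hq = diagonal lamQ - 1 := by
    have h3 : Kq * (Hq * (diagonal lamQ - 1) * Kq) * Hq
        = Kq * Hq * ((diagonal lamQ - 1) * (Kq * Hq)) := by
      simp only [mul_assoc]
    rw [h3, hKH, one_mul, mul_one]
  have hlb : (diagonal lamQ - 1).rank ≤ (Hq * (diagonal lamQ - 1) * Kq).rank := by
    calc (diagonal lamQ - 1).rank
        = (Kq * (Hq * (diagonal lamQ - 1) * Kq) * Hq).rank := by rw [e]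
      _ ≤ (Kq * (Hq * (diagonal lamQ - 1) * Kq)).rank := rank_mul_le_left _ _
      _ ≤ (Hq * (diagonal lamQ - 1) * Kq).rank := rank_mul_le_right _ _
  rw [h1, le_antisymm hub hlb]
  have h2 : diagonal lamQ - 1 = diagonal (fun i => lamQ i - 1) := by
    rw [← diagonal_one, diagonal_sub]
  rw [h2, rank_diagonal]
  have e2 : {i : Fin 32 // lamQ i - 1 ≠ 0} ≃ {i : Fin 32 // ¬ lamZ i - 1 = 0} :=
    Equiv.subtypeEquivRight (fun i => by
      simp only [lamQ, ne_eq]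
      constructor
      · intro h h'
        exact h (by rw [show lamZ i = 1 from by omega]; norm_num)
      · intro h h'
        have : ((lamZ i : ℤ) : ℚ) = ((1 : ℤ) : ℚ) := by push_cast; linarith
        have := Int.cast_injective this
        omega)
  rw [Fintype.card_congr e2]
  decide

lemma rankB0 : (cayAdj (ZMod 2) S0 + 1).rank ≤ 11 := by
  rw [h2cay]
  calc (CB.submatrix ⇑eV id * RB.submatrix id ⇑eV).rank
      ≤ (RB.submatrix id ⇑eV).rank := rank_mul_le_right _ _
    _ ≤ Fintype.card (Fin 11) := rank_le_card_height _
    _ = 11 := by simp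

set_option maxHeartbeats 1000000 in
theorem stmt12 (M W L : Submodule (ZMod 2) (Fin 5 → ZMod 2))
    (hM : Module.finrank (ZMod 2) M = 4)
    (hWM : W ≤ M) (hW : Module.finrank (ZMod 2) W = 3)
    (P : Fin 5 → ZMod 2) (hP : P ∈ M) (hPW : P ∉ W)
    (hL : Module.finrank (ZMod 2) L = 2)
    (hLM : L ⊓ M = Submodule.span (ZMod 2) {P})
    (S : Finset (Fin 5 → ZMod 2))
    (hS : (S : Set (Fin 5 → ZMod 2)) =
      (((M : Set (Fin 5 → ZMod 2)) \ (W : Set (Fin 5 → ZMod 2))) ∪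
        ((L : Set (Fin 5 → ZMod 2)) \ {0})) \ {P}) :
    (cayAdj ℚ S).charpoly =
      (X - C 9) * (X - C 5) * (X - C 1) ^ 21 * (X + C 3) ^ 7 * (X + C 7) ^ 2 ∧
    (cayAdj ℚ S - 1).rank = 11 ∧
    (cayAdj (ZMod 2) S + 1).rank ≤ 11 := by
  classical
  have hz2 : ∀ c : ZMod 2, c = 0 ∨ c = 1 := by decide
  have hadd : ∀ z : Fin 5 → ZMod 2, z + z = 0 := by decide
  have h5 : Module.finrank (ZMod 2) (Fin 5 → ZMod 2) = 5 := by
    simp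
  have hP0 : P ≠ 0 := fun h => hPW (h ▸ W.zero_mem)
  have hPL : P ∈ L := by
    have h1 : Submodule.span (ZMod 2) {P} ≤ L ⊓ M := le_of_eq hLM.symm
    exact (h1 (Submodule.mem_span_singleton_self P)).1
  obtain ⟨v, hvL, hvM⟩ : ∃ v, v ∈ L ∧ v ∉ M := by
    by_contra hcon
    push_neg at hcon
    have hLM' : L ⊓ M = L := inf_eq_left.mpr hcon
    rw [hLM'] at hLM
    rw [hLM, finrank_span_singleton hP0] at hL
    exact absurd hL (by norm_num)
  have hv0 : v ≠ 0 := fun h => hvM (h ▸ M.zero_mem)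
  have hvP : v ≠ P := fun h => hvM (h ▸ hP)
  have hWPinf : W ⊓ Submodule.span (ZMod 2) {P} = ⊥ := by
    rw [Submodule.eq_bot_iff]
    intro x hx
    obtain ⟨hxW, hxP⟩ := Submodule.mem_inf.mp hx
    rcases Submodule.mem_span_singleton.mp hxP with ⟨c, rfl⟩
    rcases hz2 c with rfl | rfl
    · rw [zero_smul]
    · rw [one_smul] at hxW ⊢
      exact absurd hxW hPW
  have hMeq : W ⊔ Submodule.span (ZMod 2) {P} = M := by
    apply Submodule.eq_of_le_of_finrank_le
      (sup_le hWM ((Submodule.span_singleton_le_iff_mem _ _).mpr hP))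
    have h1 := Submodule.finrank_sup_add_finrank_inf_eq W (Submodule.span (ZMod 2) {P})
    rw [hWPinf, finrank_bot, hW, finrank_span_singleton hP0] at h1
    rw [hM]
    omega
  have hMvinf : M ⊓ Submodule.span (ZMod 2) {v} = ⊥ := by
    rw [Submodule.eq_bot_iff]
    intro x hx
    obtain ⟨hxM, hxv⟩ := Submodule.mem_inf.mp hx
    rcases Submodule.mem_span_singleton.mp hxv with ⟨c, rfl⟩
    rcases hz2 c with rfl | rfl
    · rw [zero_smul]
    · rw [one_smul] at hxM ⊢
      exact absurd hxM hvM
  have hMtop : M ⊔ Submodule.span (ZMod 2) {v} = ⊤ := by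
    apply Submodule.eq_top_of_finrank_eq
    have h1 := Submodule.finrank_sup_add_finrank_inf_eq M (Submodule.span (ZMod 2) {v})
    rw [hMvinf, finrank_bot, hM, finrank_span_singleton hv0] at h1
    rw [h5]
    omega
  have hPvinf : Submodule.span (ZMod 2) {P} ⊓ Submodule.span (ZMod 2) {v} = ⊥ := by
    rw [Submodule.eq_bot_iff]
    intro x hx
    obtain ⟨hxP, hxv⟩ := Submodule.mem_inf.mp hx
    rcases Submodule.mem_span_singleton.mp hxP with ⟨c, rfl⟩
    rcases hz2 c with rfl | rfl
    · rw [zero_smul]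
    · exfalso
      have hPv : P ∈ Submodule.span (ZMod 2) {v} := by simpa using hxv
      rcases Submodule.mem_span_singleton.mp hPv with ⟨d, hd⟩
      rcases hz2 d with rfl | rfl
      · rw [zero_smul] at hd
        exact hP0 hd.symm
      · rw [one_smul] at hd
        exact hvM (by rw [hd]; exact hP)
  have hLeq : Submodule.span (ZMod 2) {P, v} = L := by
    apply Submodule.eq_of_le_of_finrank_le
    · rw [Submodule.span_le]
      intro x hx
      simp only [Set.mem_insert_iff, Set.mem_singleton_iff] at hx
      rcases hx with rfl | rfl
      · exact hPL
      · exact hvL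
    · rw [hL]
      have h1 := Submodule.finrank_sup_add_finrank_inf_eq
        (Submodule.span (ZMod 2) {P}) (Submodule.span (ZMod 2) {v})
      rw [hPvinf, finrank_bot, finrank_span_singleton hP0, finrank_span_singleton hv0] at h1
      have h2 : Submodule.span (ZMod 2) ({P, v} : Set (Fin 5 → ZMod 2)) =
          Submodule.span (ZMod 2) {P} ⊔ Submodule.span (ZMod 2) {v} :=
        Submodule.span_insert P {v}
      rw [h2]
      omega
  -- basis
  let w : Module.Basis (Fin 3) (ZMod 2) W := Module.finBasisOfFinrankEq (ZMod 2) W hW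
  let b : Fin 5 → (Fin 5 → ZMod 2) :=
    ![((w 0 : Fin 5 → ZMod 2)), ((w 1 : Fin 5 → ZMod 2)), ((w 2 : Fin 5 → ZMod 2)), P, v]
  have hWspan : Submodule.span (ZMod 2) (Set.range fun i => (w i : Fin 5 → ZMod 2)) = W := by
    have h1 : (Set.range fun i => (w i : Fin 5 → ZMod 2)) = W.subtype '' Set.range w := by
      rw [← Set.range_comp]; rfl
    rw [h1, ← Submodule.map_span, w.span_eq, Submodule.map_subtype_top]
  have hbspan : ⊤ ≤ Submodule.span (ZMod 2) (Set.range b) := by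
    rw [← hMtop, ← hMeq]
    refine sup_le (sup_le ?_ ?_) ?_
    · rw [← hWspan]
      apply Submodule.span_mono
      rintro x ⟨i, rfl⟩
      fin_cases i
      · exact ⟨0, rfl⟩
      · exact ⟨1, rfl⟩
      · exact ⟨2, rfl⟩
    · rw [Submodule.span_singleton_le_iff_mem]
      exact Submodule.subset_span ⟨3, rfl⟩
    · rw [Submodule.span_singleton_le_iff_mem]
      exact Submodule.subset_span ⟨4, rfl⟩
  have hcard : Fintype.card (Fin 5) = Module.finrank (ZMod 2) (Fin 5 → ZMod 2) := by
    rw [h5, Fintype.card_fin]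
  let bB : Module.Basis (Fin 5) (ZMod 2) (Fin 5 → ZMod 2) :=
    basisOfTopLeSpanOfCardEqFinrank b hbspan hcard
  let g : (Fin 5 → ZMod 2) ≃ₗ[ZMod 2] (Fin 5 → ZMod 2) :=
    (Pi.basisFun (ZMod 2) (Fin 5)).equiv bB (Equiv.refl _)
  have hg : ∀ i, g ((Pi.basisFun (ZMod 2) (Fin 5)) i) = b i := by
    intro i
    rw [Module.Basis.equiv_apply, Equiv.refl_apply]
    exact congrFun (coe_basisOfTopLeSpanOfCardEqFinrank b hbspan hcard) i
  have hgy : ∀ y : Fin 5 → ZMod 2, g y = ∑ i, y i • b i := by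
    intro y
    have hy : y = ∑ i, y i • (Pi.basisFun (ZMod 2) (Fin 5)) i := by
      funext j
      rw [Finset.sum_apply]
      simp [Pi.basisFun_apply, Pi.single_apply]
    conv_lhs => rw [hy]
    rw [map_sum]
    exact Finset.sum_congr rfl fun i _ => by rw [_root_.map_smul, hg]
  have hwli : LinearIndependent (ZMod 2) (fun i => (w i : Fin 5 → ZMod 2)) :=
    w.linearIndependent.map' W.subtype (Submodule.ker_subtype W)
  have hcomb : ∀ c : Fin 3 → ZMod 2, (∑ i, c i • (w i : Fin 5 → ZMod 2)) = 0 → c = 0 := by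
    intro c hc
    funext i
    exact Fintype.linearIndependent_iff.mp hwli c hc i
  -- membership description of S
  have hSmem : ∀ z, z ∈ S ↔ ((z ∈ M ∧ z ∉ W) ∨ (z ∈ L ∧ z ≠ 0)) ∧ z ≠ P := by
    intro z
    have h := Set.ext_iff.mp hS z
    simpa [Set.mem_diff, Set.mem_union, Set.mem_singleton_iff] using h
  have hS' : ∀ z, z ∈ S ↔
      ((∃ x ∈ W, x ≠ 0 ∧ z = P + x) ∨ z = v ∨ z = P + v) := by
    intro z
    rw [hSmem z]
    constructor
    · rintro ⟨h1 | h2, hzP⟩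
      · have hzM : z ∈ W ⊔ Submodule.span (ZMod 2) {P} := by rw [hMeq]; exact h1.1
        rcases Submodule.mem_sup.mp hzM with ⟨x, hxW, p, hp, rfl⟩
        rcases Submodule.mem_span_singleton.mp hp with ⟨c, rfl⟩
        rcases hz2 c with rfl | rfl
        · exfalso
          exact h1.2 (by simpa using hxW)
        · left
          refine ⟨x, hxW, ?_, by rw [one_smul, add_comm]⟩
          intro h0
          exact hzP (by rw [h0, zero_add, one_smul])
      · have hzL : z ∈ Submodule.span (ZMod 2) {P, v} := by rw [hLeq]; exact h2.1
        rcases Submodule.mem_span_pair.mp hzL with ⟨a, c, hz⟩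
        rcases hz2 a with rfl | rfl <;> rcases hz2 c with rfl | rfl
        · exact absurd (by rw [← hz]; simp) h2.2
        · right; left; rw [← hz]; simp
        · exact absurd (by rw [← hz]; simp) hzP
        · right; right; rw [← hz]; simp
    · rintro (⟨x, hxW, hx0, rfl⟩ | rfl | rfl)
      · refine ⟨Or.inl ⟨M.add_mem hP (hWM hxW), ?_⟩, ?_⟩
        · intro hPx
          apply hPW
          have h1 : P + x + x = P := by rw [add_assoc, hadd x, add_zero]
          exact h1 ▸ W.add_mem hPx hxW
        · intro hPx
          rw [add_eq_left] at hPx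
          exact hx0 hPx
      · exact ⟨Or.inr ⟨hvL, hv0⟩, hvP⟩
      · refine ⟨Or.inr ⟨L.add_mem hPL hvL, ?_⟩, ?_⟩
        · intro h0
          have h2 : P = v := by
            have h1 : P + v + v = 0 + v := by rw [h0]
            rwa [add_assoc, hadd v, add_zero, zero_add] at h1
          exact hvM (h2 ▸ hP)
        · intro hPv
          rw [add_eq_left] at hPv
          exact hv0 hPv
  have hS0 : ∀ u : Fin 5 → ZMod 2, u ∈ S0 ↔
      ((∃ c : Fin 3 → ZMod 2, c ≠ 0 ∧ u = ![c 0, c 1, c 2, 1, 0]) ∨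
        u = ![0,0,0,0,1] ∨ u = ![0,0,0,1,1]) := by decide
  have hgc : ∀ c : Fin 3 → ZMod 2,
      g ![c 0, c 1, c 2, 1, 0] = P + ∑ i, c i • (w i : Fin 5 → ZMod 2) := by
    intro c
    rw [hgy, Fin.sum_univ_five, Fin.sum_univ_three]
    simp only [b, Matrix.cons_val_zero, Matrix.cons_val_one, Matrix.head_cons,
      Matrix.cons_val_two, Matrix.tail_cons, Matrix.cons_val_three, Matrix.cons_val_four,
      one_smul, zero_smul, add_zero]
    abel
  have hgv : g ![0,0,0,0,1] = v := by
    rw [hgy, Fin.sum_univ_five]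
    simp [b]
  have hgpv : g ![0,0,0,1,1] = P + v := by
    rw [hgy, Fin.sum_univ_five]
    simp [b]
  have hmem : ∀ u, g u ∈ S ↔ u ∈ S0 := by
    intro u
    rw [hS' (g u), hS0 u]
    constructor
    · rintro (⟨x, hxW, hx0, hgu⟩ | hgu | hgu)
      · have hx : x ∈ Submodule.span (ZMod 2) (Set.range fun i => (w i : Fin 5 → ZMod 2)) := by
          rw [hWspan]; exact hxW
        rcases (Submodule.mem_span_range_iff_exists_fun (ZMod 2)).mp hx with ⟨c, hc⟩
        left
        refine ⟨c, ?_, ?_⟩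
        · rintro rfl
          apply hx0
          rw [← hc]
          simp
        · apply g.injective
          rw [hgc c, hc, hgu]
      · right; left
        apply g.injective
        rw [hgv, hgu]
      · right; right
        apply g.injective
        rw [hgpv, hgu]
    · rintro (⟨c, hc0, rfl⟩ | rfl | rfl)
      · left
        refine ⟨∑ i, c i • (w i : Fin 5 → ZMod 2),
          Submodule.sum_mem _ (fun i _ => W.smul_mem _ (w i).2), ?_, hgc c⟩
        intro h0
        exact hc0 (hcomb c h0)
      · right; left; exact hgv
      · right; right; exact hgpv
  have hset : ∀ z, z ∈ S ↔ g.symm z ∈ S0 := by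
    intro z
    have h := hmem (g.symm z)
    rwa [g.apply_symm_apply] at h
  -- matrix reductions
  let e : (Fin 5 → ZMod 2) ≃ (Fin 5 → ZMod 2) := g.symm.toEquiv
  have hmatQ : cayAdj ℚ S = (cayAdj ℚ S0).submatrix ⇑e ⇑e := by
    ext x y
    show (if x + y ∈ S then (1:ℚ) else 0) = (if g.symm x + g.symm y ∈ S0 then (1:ℚ) else 0)
    rw [← map_add]
    exact if_congr (hset (x + y)) rfl rfl
  have hmat2 : cayAdj (ZMod 2) S = (cayAdj (ZMod 2) S0).submatrix ⇑e ⇑e := by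
    ext x y
    show (if x + y ∈ S then (1:ZMod 2) else 0) =
      (if g.symm x + g.symm y ∈ S0 then (1:ZMod 2) else 0)
    rw [← map_add]
    exact if_congr (hset (x + y)) rfl rfl
  refine ⟨?_, ?_, ?_⟩
  · rw [hmatQ,
      show (cayAdj ℚ S0).submatrix ⇑e ⇑e = reindex e.symm e.symm (cayAdj ℚ S0) from by
        rw [reindex_apply, Equiv.symm_symm],
      charpoly_reindex, hQcay,
      show Aq.submatrix ⇑eV ⇑eV = reindex eV.symm eV.symm Aq from by
        rw [reindex_apply, Equiv.symm_symm],
      charpoly_reindex]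
    exact charpoly_Aq
  · rw [hmatQ]
    have h1 : (cayAdj ℚ S0).submatrix ⇑e ⇑e - 1 = (cayAdj ℚ S0 - 1).submatrix ⇑e ⇑e := by
      ext x y
      simp [Matrix.one_apply, e.apply_eq_iff_eq]
    rw [h1, rank_submatrix]
    have h2 : cayAdj ℚ S0 - 1 = (Aq - 1).submatrix ⇑eV ⇑eV := by
      rw [hQcay]
      ext x y
      simp [Matrix.one_apply, eV.apply_eq_iff_eq]
    rw [h2, rank_submatrix]
    exact rank_Aq
  · rw [hmat2]
    have h1 : (cayAdj (ZMod 2) S0).submatrix ⇑e ⇑e + 1 =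
        (cayAdj (ZMod 2) S0 + 1).submatrix ⇑e ⇑e := by
      ext x y
      simp [Matrix.one_apply, e.apply_eq_iff_eq]
    rw [h1, rank_submatrix]
    exact rankB0
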